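/- arXiv:0712.2193 — 2 statements merged into one kernel-verified Lean document; each statement's English description precedes it below -/
import Mathlib

section
/- (Lemma 6.1 for bundles over compact hyperbolic surfaces: normalization, range, and affine classification of leafwise harmonic functions.) Let Γ be a cocompact Fuchsian group acting on [0,1] by homeomorphisms fixing 0 and 1, with no point x ∈ (0,1) having a finite Γ-orbit. Suppose there exists a Γ-invariant leafwise harmonic function g̃₀ : 𝔻 × [0,1] → ℝ that is non-trivial, i.e., for some x the function z ↦ g̃₀(z,x) is nonconstant. Then: (a) there exists a unique Γ-invariant leafwise harmonic function f̃ : 𝔻 × [0,1] → ℝ with f̃(z,0) = 0 and f̃(z,1) = 1 for all z ∈ 𝔻; (b) this f̃ satisfies 0 < f̃(z,x) < 1 for all z ∈ 𝔻 and all x ∈ (0,1); (c) every Γ-invariant leafwise harmonic function g̃ : 𝔻 × [0,1] → ℝ is of the form g̃ = a·f̃ + b for some constants a, b ∈ ℝ. -/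
open Metric Set Filter

noncomputable section

/-- The open unit disc in `ℂ`. -/
def unitDisc : Set ℂ := Metric.ball 0 1

/-- A function `f : ℂ → ℝ` is harmonic on a set `U ⊆ ℂ` if, locally on `U`, it is
the real part of a holomorphic function (for open `U` this is equivalent to being
`C²` with vanishing Laplacian). -/
def HarmonicOnSet (f : ℂ → ℝ) (U : Set ℂ) : Prop :=
  ∀ z ∈ U, ∃ r > 0, Metric.ball z r ⊆ U ∧
    ∃ g : ℂ → ℂ, DifferentiableOn ℂ g (Metric.ball z r) ∧
      ∀ w ∈ Metric.ball z r, f w = (g w).re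

/-- `ρ` is a cocompact Fuchsian group action of `Γ` on the open unit disc: a faithful,
properly discontinuous, cocompact action by Möbius transformations
`z ↦ (αz+β)/(β̄z+ᾱ)` with `|α|² - |β|² = 1`. -/
structure IsCocompactFuchsian (Γ : Type*) [Group Γ] (ρ : Γ → ℂ → ℂ) : Prop where
  one_act : ∀ z ∈ unitDisc, ρ 1 z = z
  mul_act : ∀ γ₁ γ₂ : Γ, ∀ z ∈ unitDisc, ρ (γ₁ * γ₂) z = ρ γ₁ (ρ γ₂ z)
  maps_disc : ∀ γ : Γ, ∀ z ∈ unitDisc, ρ γ z ∈ unitDisc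
  moebius : ∀ γ : Γ, ∃ α β : ℂ, ‖α‖ ^ 2 - ‖β‖ ^ 2 = 1 ∧
    ∀ z ∈ unitDisc, ρ γ z = (α * z + β) / ((starRingEnd ℂ) β * z + (starRingEnd ℂ) α)
  faithful : ∀ γ : Γ, (∀ z ∈ unitDisc, ρ γ z = z) → γ = 1
  properly_discontinuous : ∀ K : Set ℂ, K ⊆ unitDisc → IsCompact K →
    {γ : Γ | ((ρ γ '' K) ∩ K).Nonempty}.Finite
  cocompact : ∃ K : Set ℂ, K ⊆ unitDisc ∧ IsCompact K ∧ ∀ z ∈ unitDisc, ∃ γ : Γ, ρ γ z ∈ K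

/-- `σ` is an action of the group `Γ` on the topological space `X` by homeomorphisms. -/
structure IsActionByHomeomorphisms (Γ : Type*) [Group Γ] (X : Type*) [TopologicalSpace X]
    (σ : Γ → X → X) : Prop where
  one_act : ∀ x : X, σ 1 x = x
  mul_act : ∀ γ₁ γ₂ : Γ, ∀ x : X, σ (γ₁ * γ₂) x = σ γ₁ (σ γ₂ x)
  continuous_act : ∀ γ : Γ, Continuous (σ γ)

/-- `f` is a `Γ`-invariant leafwise harmonic function on `𝔻 × [0,1]`. -/
def IsInvariantLeafwiseHarmonicI {Γ : Type*} [Group Γ] (ρ : Γ → ℂ → ℂ)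
    (σ : Γ → unitInterval → unitInterval) (f : ℂ → unitInterval → ℝ) : Prop :=
  ContinuousOn (fun p : ℂ × unitInterval => f p.1 p.2)
      (unitDisc ×ˢ (univ : Set unitInterval)) ∧
  (∀ x : unitInterval, HarmonicOnSet (fun z => f z x) unitDisc) ∧
  (∀ γ : Γ, ∀ z ∈ unitDisc, ∀ x : unitInterval, f (ρ γ z) (σ γ x) = f z x)

namespace L61

lemma zero_mem_unitDisc : (0 : ℂ) ∈ unitDisc := by
  simp [unitDisc]

lemma isOpen_unitDisc : IsOpen unitDisc := isOpen_ball

lemma isPreconnected_unitDisc : IsPreconnected unitDisc :=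
  (convex_ball (0:ℂ) 1).isPreconnected

/-- Harmonic functions are continuous. -/
lemma harmonic_continuousOn {h : ℂ → ℝ} {U : Set ℂ} (hh : HarmonicOnSet h U) :
    ContinuousOn h U := by
  intro z hz
  obtain ⟨r, hr, hball, g, hg, heq⟩ := hh z hz
  have hb : Metric.ball z r ∈ nhds z := ball_mem_nhds z hr
  have hca : ContinuousAt (fun w => (g w).re) z :=
    Complex.continuous_re.continuousAt.comp
      ((hg.continuousOn).continuousAt hb)
  exact (hca.congr (Filter.eventuallyEq_of_mem hb fun w hw => (heq w hw).symm)).continuousWithinAt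

/-- Affine images of harmonic functions are harmonic. -/
lemma harmonic_affine {h : ℂ → ℝ} {U : Set ℂ} (hh : HarmonicOnSet h U) (a b : ℝ) :
    HarmonicOnSet (fun z => a * h z + b) U := by
  intro z hz
  obtain ⟨r, hr, hball, g, hg, heq⟩ := hh z hz
  refine ⟨r, hr, hball, fun w => (a : ℂ) * g w + (b : ℂ), (hg.const_smul (a:ℂ)).add_const _, ?_⟩
  · intro w hw
    simp [Complex.add_re, Complex.mul_re, heq w hw]

/-- Differences of harmonic functions are harmonic. -/
lemma harmonic_sub {h₁ h₂ : ℂ → ℝ} {U : Set ℂ} (hh₁ : HarmonicOnSet h₁ U)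
    (hh₂ : HarmonicOnSet h₂ U) : HarmonicOnSet (fun z => h₁ z - h₂ z) U := by
  intro z hz
  obtain ⟨r₁, hr₁, hball₁, g₁, hg₁, heq₁⟩ := hh₁ z hz
  obtain ⟨r₂, hr₂, hball₂, g₂, hg₂, heq₂⟩ := hh₂ z hz
  refine ⟨min r₁ r₂, lt_min hr₁ hr₂, (ball_subset_ball (min_le_left _ _)).trans hball₁,
    fun w => g₁ w - g₂ w,
    (hg₁.mono (ball_subset_ball (min_le_left _ _))).sub
      (hg₂.mono (ball_subset_ball (min_le_right _ _))), ?_⟩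
  intro w hw
  show h₁ w - h₂ w = _
  rw [Complex.sub_re, heq₁ w (ball_subset_ball (min_le_left _ _) hw),
    heq₂ w (ball_subset_ball (min_le_right _ _) hw)]

/-- Maximum principle: a harmonic function on the disc attaining its supremum is constant. -/
lemma max_principle {h : ℂ → ℝ} (hh : HarmonicOnSet h unitDisc)
    {z₁ : ℂ} (hz₁ : z₁ ∈ unitDisc) (hmax : ∀ z ∈ unitDisc, h z ≤ h z₁) :
    ∀ z ∈ unitDisc, h z = h z₁ := by
  set S : Set ℂ := {z | z ∈ unitDisc ∧ h z = h z₁} with hS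
  have hSopen : IsOpen S := by
    rw [Metric.isOpen_iff]
    rintro z ⟨hzD, hzv⟩
    obtain ⟨r, hr, hball, g, hg, heq⟩ := hh z hzD
    refine ⟨r, hr, ?_⟩
    have hdiff : DifferentiableOn ℂ (fun w => Complex.exp (g w)) (Metric.ball z r) := hg.cexp
    have hnorm : ∀ w ∈ Metric.ball z r, ‖Complex.exp (g w)‖ = Real.exp (h w) := by
      intro w hw
      rw [Complex.norm_exp, heq w hw]
    have hm : IsMaxOn (norm ∘ fun w => Complex.exp (g w)) (Metric.ball z r) z := by
      rw [isMaxOn_iff]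
      intro w hw
      have : h w ≤ h z := by
        rw [hzv]; exact hmax w (hball hw)
      simp only [Function.comp_apply, hnorm w hw, hnorm z (mem_ball_self hr)]
      exact Real.exp_le_exp.2 this
    have hconst := Complex.norm_eqOn_of_isPreconnected_of_isMaxOn
      (convex_ball z r).isPreconnected isOpen_ball hdiff (mem_ball_self hr) hm
    intro w hw
    have h1 : Real.exp (h w) = Real.exp (h z) := by
      rw [← hnorm w hw, ← hnorm z (mem_ball_self hr)]
      exact hconst hw
    exact ⟨hball hw, by rw [← hzv]; exact Real.exp_injective h1⟩
  have hTopen : IsOpen (unitDisc ∩ h ⁻¹' {h z₁}ᶜ) :=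
    (harmonic_continuousOn hh).isOpen_inter_preimage isOpen_unitDisc (isOpen_compl_singleton)
  intro z hz
  by_contra hne
  obtain ⟨w, hwD, hwS, hwT⟩ := isPreconnected_unitDisc S (unitDisc ∩ h ⁻¹' {h z₁}ᶜ)
    hSopen hTopen
    (fun y hy => by
      by_cases hcase : h y = h z₁
      · exact Or.inl ⟨hy, hcase⟩
      · exact Or.inr ⟨hy, hcase⟩)
    ⟨z₁, hz₁, hz₁, rfl⟩ ⟨z, hz, hz, hne⟩
  exact hwT.2 hwS.2

end L61

section Part2
open L61

variable {Γ : Type*} [Group Γ] {ρ : Γ → ℂ → ℂ} {σ : Γ → unitInterval → unitInterval}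

/-- Each `σ γ` is monotone. -/
lemma sigma_mono (hσ : IsActionByHomeomorphisms Γ unitInterval σ)
    (hfix0 : ∀ γ : Γ, σ γ 0 = 0) (γ : Γ) : Monotone (σ γ) := by
  have hinj : Function.Injective (σ γ) := by
    intro x y hxy
    have := congrArg (σ γ⁻¹) hxy
    rwa [← hσ.mul_act, ← hσ.mul_act, inv_mul_cancel, hσ.one_act, hσ.one_act] at this
  have hF : StrictMonoOn (fun t : ℝ => ((σ γ (Set.projIcc 0 1 zero_le_one t) : ℝ)))
      (Icc (0:ℝ) 1) := by
    apply ContinuousOn.strictMonoOn_of_injOn_Icc zero_le_one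
    · simp only [Set.projIcc_left, Set.projIcc_right]
      have h0 : σ γ ⟨0, by norm_num⟩ = 0 := hfix0 γ
      rw [show (⟨(0:ℝ), by norm_num⟩ : unitInterval) = 0 from rfl,
        show (⟨(1:ℝ), by norm_num⟩ : unitInterval) = 1 from rfl, hfix0 γ]
      exact (σ γ 1).2.1
    · exact (continuous_subtype_val.comp
        ((hσ.continuous_act γ).comp continuous_projIcc)).continuousOn
    · intro a ha b hb hab
      have h2 : Set.projIcc (0:ℝ) 1 zero_le_one a = Set.projIcc 0 1 zero_le_one b :=
        hinj (Subtype.ext hab)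
      rwa [Set.projIcc_of_mem _ ha, Set.projIcc_of_mem _ hb, Subtype.mk.injEq] at h2
  intro x y hxy
  rcases eq_or_lt_of_le hxy with rfl | hlt
  · exact le_refl _
  · have h2 := hF x.2 y.2 (by exact_mod_cast hlt)
    simp only [Set.projIcc_val] at h2
    exact le_of_lt (by exact_mod_cast h2)

/-- A closed invariant set's least/greatest point is fixed by the action. -/
lemma least_fixed (hσ : IsActionByHomeomorphisms Γ unitInterval σ)
    (hfix0 : ∀ γ : Γ, σ γ 0 = 0) {A : Set unitInterval}
    (hinv : ∀ γ : Γ, ∀ x ∈ A, σ γ x ∈ A) {a : unitInterval} (ha : IsLeast A a) (γ : Γ) :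
    σ γ a = a := by
  refine IsLeast.unique ⟨hinv γ a ha.1, ?_⟩ ha
  intro y hy
  have h1 : σ γ⁻¹ y ∈ A := hinv γ⁻¹ y hy
  have h2 : a ≤ σ γ⁻¹ y := ha.2 h1
  have h3 := sigma_mono hσ hfix0 γ h2
  rwa [← hσ.mul_act, mul_inv_cancel, hσ.one_act] at h3

lemma greatest_fixed (hσ : IsActionByHomeomorphisms Γ unitInterval σ)
    (hfix0 : ∀ γ : Γ, σ γ 0 = 0) {A : Set unitInterval}
    (hinv : ∀ γ : Γ, ∀ x ∈ A, σ γ x ∈ A) {a : unitInterval} (ha : IsGreatest A a) (γ : Γ) :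
    σ γ a = a := by
  refine IsGreatest.unique ⟨hinv γ a ha.1, ?_⟩ ha
  intro y hy
  have h1 : σ γ⁻¹ y ∈ A := hinv γ⁻¹ y hy
  have h2 : σ γ⁻¹ y ≤ a := ha.2 h1
  have h3 := sigma_mono hσ hfix0 γ h2
  rwa [← hσ.mul_act, mul_inv_cancel, hσ.one_act] at h3

/-- Fibers of an invariant leafwise harmonic function are continuous in `x`. -/
lemma cont_fiber {g : ℂ → unitInterval → ℝ} (hg : IsInvariantLeafwiseHarmonicI ρ σ g)
    {z : ℂ} (hz : z ∈ unitDisc) : Continuous (fun x : unitInterval => g z x) := by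
  have hO : IsOpen (unitDisc ×ˢ (univ : Set unitInterval)) :=
    isOpen_unitDisc.prod isOpen_univ
  refine continuous_iff_continuousAt.2 fun x => ?_
  have h1 : ContinuousAt (fun p : ℂ × unitInterval => g p.1 p.2) (z, x) :=
    hg.1.continuousAt (hO.mem_nhds ⟨hz, mem_univ x⟩)
  exact h1.comp ((continuous_const.prodMk continuous_id).continuousAt)

/-- Affine images of invariant leafwise harmonic functions. -/
lemma ILH_affine {g : ℂ → unitInterval → ℝ} (hg : IsInvariantLeafwiseHarmonicI ρ σ g)
    (a b : ℝ) : IsInvariantLeafwiseHarmonicI ρ σ (fun z x => a * g z x + b) := by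
  refine ⟨?_, fun x => harmonic_affine (hg.2.1 x) a b, ?_⟩
  · exact ((continuous_const.mul continuous_id).add continuous_const).comp_continuousOn hg.1
  · intro γ z hz x
    simp only [hg.2.2 γ z hz x]

lemma ILH_sub {g₁ g₂ : ℂ → unitInterval → ℝ} (hg₁ : IsInvariantLeafwiseHarmonicI ρ σ g₁)
    (hg₂ : IsInvariantLeafwiseHarmonicI ρ σ g₂) :
    IsInvariantLeafwiseHarmonicI ρ σ (fun z x => g₁ z x - g₂ z x) := by
  refine ⟨hg₁.1.sub hg₂.1, fun x => harmonic_sub (hg₁.2.1 x) (hg₂.2.1 x), ?_⟩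
  intro γ z hz x
  simp only [hg₁.2.2 γ z hz x, hg₂.2.2 γ z hz x]

end Part2


section Part3
open L61

variable {Γ : Type*} [Group Γ] {ρ : Γ → ℂ → ℂ} {σ : Γ → unitInterval → unitInterval}

/-- On a fiber over a global fixed point, an invariant leafwise harmonic function is
constant (in `z`). -/
lemma boundary_const (hΓ : IsCocompactFuchsian Γ ρ) {x : unitInterval}
    (hfix : ∀ γ : Γ, σ γ x = x) {g : ℂ → unitInterval → ℝ}
    (hg : IsInvariantLeafwiseHarmonicI ρ σ g) :
    ∀ z ∈ unitDisc, g z x = g 0 x := by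
  obtain ⟨K, hKD, hKc, hKcov⟩ := hΓ.cocompact
  obtain ⟨γ₀, hγ₀⟩ := hKcov 0 zero_mem_unitDisc
  have hcont : ContinuousOn (fun z => g z x) unitDisc := harmonic_continuousOn (hg.2.1 x)
  obtain ⟨z₁, hz₁K, hmaxK⟩ := hKc.exists_isMaxOn ⟨_, hγ₀⟩ (hcont.mono hKD)
  have hz₁ : z₁ ∈ unitDisc := hKD hz₁K
  have hglobal : ∀ z ∈ unitDisc, g z x ≤ g z₁ x := by
    intro z hz
    obtain ⟨γ, hγ⟩ := hKcov z hz
    have h1 : g (ρ γ z) x = g z x := by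
      have := hg.2.2 γ z hz x; rwa [hfix γ] at this
    rw [← h1]; exact hmaxK hγ
  have hconst := max_principle (hg.2.1 x) hz₁ hglobal
  intro z hz
  rw [hconst z hz, hconst 0 zero_mem_unitDisc]

/-- Key rigidity: an invariant leafwise harmonic function bounded below by `c` cannot
attain the value `c` over an interior point of the interval, unless it also equals `c`
on a boundary fiber. -/
lemma no_flat_interior (hΓ : IsCocompactFuchsian Γ ρ)
    (hσ : IsActionByHomeomorphisms Γ unitInterval σ)
    (hfix0 : ∀ γ : Γ, σ γ 0 = 0)
    (hnofinite : ∀ x : unitInterval, 0 < (x : ℝ) → (x : ℝ) < 1 →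
      (Set.range fun γ : Γ => σ γ x).Infinite)
    {g : ℂ → unitInterval → ℝ} (hg : IsInvariantLeafwiseHarmonicI ρ σ g) {c : ℝ}
    (hlb : ∀ z ∈ unitDisc, ∀ x : unitInterval, c ≤ g z x)
    {x₀ : unitInterval} (hx0 : 0 < (x₀ : ℝ)) (hx1 : (x₀ : ℝ) < 1)
    {z₀ : ℂ} (hz₀ : z₀ ∈ unitDisc) (hc : g z₀ x₀ = c)
    (hbd : g 0 0 ≠ c ∨ g 0 1 ≠ c) : False := by
  -- the whole fiber over x₀ is constantly c (minimum principle)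
  have hfiber : ∀ z ∈ unitDisc, g z x₀ = c := by
    have hneg : HarmonicOnSet (fun w => -1 * g w x₀ + 0) unitDisc :=
      harmonic_affine (hg.2.1 x₀) (-1) 0
    have hmax : ∀ z ∈ unitDisc, (fun w => -1 * g w x₀ + 0) z ≤ (fun w => -1 * g w x₀ + 0) z₀ := by
      intro z hz
      have h1 := hlb z hz x₀
      show -1 * g z x₀ + 0 ≤ -1 * g z₀ x₀ + 0
      linarith [hc.le, hc.ge]
    have h2 := max_principle hneg hz₀ hmax
    intro z hz
    have h3 : -1 * g z x₀ + 0 = -1 * g z₀ x₀ + 0 := h2 z hz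
    have h4 : g z₀ x₀ = c := hc
    linarith
  set A : Set unitInterval := {x | ∀ z ∈ unitDisc, g z x = c} with hA
  have hx₀A : x₀ ∈ A := hfiber
  have hAcl : IsClosed A := by
    have hrepr : A = ⋂ (z : ℂ) (_ : z ∈ unitDisc), {x | g z x = c} := by
      ext x; simp [hA]
    rw [hrepr]
    exact isClosed_iInter fun z => isClosed_iInter fun hz =>
      isClosed_eq (cont_fiber hg hz) continuous_const
  have hAinv : ∀ γ : Γ, ∀ x ∈ A, σ γ x ∈ A := by
    intro γ x hx z hz
    have h1 : ρ γ⁻¹ z ∈ unitDisc := hΓ.maps_disc γ⁻¹ z hz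
    have h2 : ρ γ (ρ γ⁻¹ z) = z := by
      rw [← hΓ.mul_act γ γ⁻¹ z hz, mul_inv_cancel, hΓ.one_act z hz]
    calc g z (σ γ x) = g (ρ γ (ρ γ⁻¹ z)) (σ γ x) := by rw [h2]
      _ = g (ρ γ⁻¹ z) x := hg.2.2 γ _ h1 x
      _ = c := hx _ h1
  have hAcomp : IsCompact A := hAcl.isCompact
  rcases hbd with hb0 | hb1
  · -- 0 ∉ A; use the least element of A
    have h0A : (0 : unitInterval) ∉ A := fun h => hb0 (h 0 zero_mem_unitDisc)
    obtain ⟨a, haA, halb⟩ := hAcomp.exists_isLeast ⟨x₀, hx₀A⟩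
    have hfixa : ∀ γ : Γ, σ γ a = a := least_fixed hσ hfix0 hAinv ⟨haA, halb⟩
    have ha0 : 0 < (a : ℝ) := by
      rcases lt_or_eq_of_le a.2.1 with h | h
      · exact h
      · exact absurd haA (by
          have ha : a = (0 : unitInterval) := Subtype.ext h.symm
          rw [ha]; exact h0A)
    have ha1 : (a : ℝ) < 1 := lt_of_le_of_lt (show (a:ℝ) ≤ (x₀:ℝ) from halb hx₀A) hx1
    exact (hnofinite a ha0 ha1)
      ((Set.finite_singleton a).subset (Set.range_subset_iff.2 fun γ => hfixa γ))
  · -- 1 ∉ A; use the greatest element of A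
    have h1A : (1 : unitInterval) ∉ A := fun h => hb1 (h 0 zero_mem_unitDisc)
    obtain ⟨s, hsA, hsub⟩ := hAcomp.exists_isGreatest ⟨x₀, hx₀A⟩
    have hfixs : ∀ γ : Γ, σ γ s = s := greatest_fixed hσ hfix0 hAinv ⟨hsA, hsub⟩
    have hs1 : (s : ℝ) < 1 := by
      rcases lt_or_eq_of_le s.2.2 with h | h
      · exact h
      · exact absurd hsA (fun he => h1A ((Subtype.ext h : s = 1) ▸ he))
    have hs0 : 0 < (s : ℝ) := lt_of_lt_of_le hx0 (show (x₀:ℝ) ≤ (s:ℝ) from hsub hx₀A)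
    exact (hnofinite s hs0 hs1)
      ((Set.finite_singleton s).subset (Set.range_subset_iff.2 fun γ => hfixs γ))

/-- Upper bound by boundary values. -/
lemma ub_bound (hΓ : IsCocompactFuchsian Γ ρ)
    (hσ : IsActionByHomeomorphisms Γ unitInterval σ)
    (hfix0 : ∀ γ : Γ, σ γ 0 = 0) (hfix1 : ∀ γ : Γ, σ γ 1 = 1)
    (hnofinite : ∀ x : unitInterval, 0 < (x : ℝ) → (x : ℝ) < 1 →
      (Set.range fun γ : Γ => σ γ x).Infinite)
    {g : ℂ → unitInterval → ℝ} (hg : IsInvariantLeafwiseHarmonicI ρ σ g) :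
    ∀ z ∈ unitDisc, ∀ x : unitInterval, g z x ≤ max (g 0 0) (g 0 1) := by
  obtain ⟨K, hKD, hKc, hKcov⟩ := hΓ.cocompact
  obtain ⟨γ₀, hγ₀⟩ := hKcov 0 zero_mem_unitDisc
  have hCc : IsCompact (K ×ˢ (univ : Set unitInterval)) := hKc.prod isCompact_univ
  have hCne : (K ×ˢ (univ : Set unitInterval)).Nonempty := ⟨(ρ γ₀ 0, 0), hγ₀, mem_univ _⟩
  obtain ⟨⟨z₁, x₁⟩, hmem, hmax⟩ := hCc.exists_isMaxOn hCne
    (hg.1.mono (prod_mono hKD (subset_refl _)))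
  have hz₁ : z₁ ∈ unitDisc := hKD hmem.1
  have hglobal : ∀ z ∈ unitDisc, ∀ x : unitInterval, g z x ≤ g z₁ x₁ := by
    intro z hz x
    obtain ⟨γ, hγ⟩ := hKcov z hz
    rw [← hg.2.2 γ z hz x]
    exact hmax (show ((ρ γ z, σ γ x) : ℂ × unitInterval) ∈ K ×ˢ univ from ⟨hγ, mem_univ _⟩)
  by_cases h00 : g 0 0 = g z₁ x₁
  · intro z hz x
    exact (hglobal z hz x).trans (h00 ▸ le_max_left _ _)
  by_cases h01 : g 0 1 = g z₁ x₁
  · intro z hz x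
    exact (hglobal z hz x).trans (h01 ▸ le_max_right _ _)
  exfalso
  -- apply the rigidity lemma to -g
  have hgneg : IsInvariantLeafwiseHarmonicI ρ σ (fun z x => -1 * g z x + 0) :=
    ILH_affine hg (-1) 0
  have hlbneg : ∀ z ∈ unitDisc, ∀ x : unitInterval,
      (-1 * g z₁ x₁ + 0) ≤ -1 * g z x + 0 := by
    intro z hz x; have := hglobal z hz x; linarith
  -- x₁ is interior
  have hx₁0 : 0 < (x₁ : ℝ) := by
    rcases lt_or_eq_of_le x₁.2.1 with h | h
    · exact h
    · exfalso
      apply h00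
      have hx₁ : x₁ = 0 := Subtype.ext h.symm
      rw [hx₁]
      exact (boundary_const hΓ hfix0 hg z₁ hz₁).symm
  have hx₁1 : (x₁ : ℝ) < 1 := by
    rcases lt_or_eq_of_le x₁.2.2 with h | h
    · exact h
    · exfalso
      apply h01
      have hx₁ : x₁ = 1 := Subtype.ext h
      rw [hx₁]
      exact (boundary_const hΓ hfix1 hg z₁ hz₁).symm
  refine no_flat_interior hΓ hσ hfix0 hnofinite hgneg hlbneg hx₁0 hx₁1 hz₁ rfl ?_
  left
  show -1 * g 0 0 + 0 ≠ -1 * g z₁ x₁ + 0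
  intro h
  exact h00 (by linarith)

/-- Lower bound by boundary values. -/
lemma lb_bound (hΓ : IsCocompactFuchsian Γ ρ)
    (hσ : IsActionByHomeomorphisms Γ unitInterval σ)
    (hfix0 : ∀ γ : Γ, σ γ 0 = 0) (hfix1 : ∀ γ : Γ, σ γ 1 = 1)
    (hnofinite : ∀ x : unitInterval, 0 < (x : ℝ) → (x : ℝ) < 1 →
      (Set.range fun γ : Γ => σ γ x).Infinite)
    {g : ℂ → unitInterval → ℝ} (hg : IsInvariantLeafwiseHarmonicI ρ σ g) :
    ∀ z ∈ unitDisc, ∀ x : unitInterval, min (g 0 0) (g 0 1) ≤ g z x := by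
  intro z hz x
  have h2 := ub_bound hΓ hσ hfix0 hfix1 hnofinite (ILH_affine hg (-1) 0) z hz x
  rcases le_max_iff.1 h2 with h3 | h3
  · have := min_le_left (g 0 0) (g 0 1); linarith
  · have := min_le_right (g 0 0) (g 0 1); linarith

/-- Vanishing at both boundaries forces vanishing everywhere. -/
lemma eq_zero_of_boundary_zero (hΓ : IsCocompactFuchsian Γ ρ)
    (hσ : IsActionByHomeomorphisms Γ unitInterval σ)
    (hfix0 : ∀ γ : Γ, σ γ 0 = 0) (hfix1 : ∀ γ : Γ, σ γ 1 = 1)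
    (hnofinite : ∀ x : unitInterval, 0 < (x : ℝ) → (x : ℝ) < 1 →
      (Set.range fun γ : Γ => σ γ x).Infinite)
    {g : ℂ → unitInterval → ℝ} (hg : IsInvariantLeafwiseHarmonicI ρ σ g)
    (h00 : g 0 0 = 0) (h01 : g 0 1 = 0) :
    ∀ z ∈ unitDisc, ∀ x : unitInterval, g z x = 0 := by
  intro z hz x
  have h1 := ub_bound hΓ hσ hfix0 hfix1 hnofinite hg z hz x
  have h2 := lb_bound hΓ hσ hfix0 hfix1 hnofinite hg z hz x
  rw [h00, h01] at h1 h2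
  simp only [max_self, min_self] at h1 h2
  linarith

end Part3


/-- **Lemma 6.1 (normalization, range and affine classification).** Suppose a cocompact
Fuchsian group `Γ` acts on `[0,1]` by homeomorphisms fixing `0` and `1` with no finite
interior orbit, and some non-trivial `Γ`-invariant leafwise harmonic function exists. Then:
(a) there is a unique (on `𝔻 × [0,1]`) `Γ`-invariant leafwise harmonic `f` with boundary
values `0` and `1`; (b) `0 < f(z,x) < 1` for interior `x`; (c) every `Γ`-invariant
leafwise harmonic function is of the form `a·f + b`. -/
theorem normalized_harmonic_function_exists_unique
    {Γ : Type*} [Group Γ] (ρ : Γ → ℂ → ℂ) (hΓ : IsCocompactFuchsian Γ ρ)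
    (σ : Γ → unitInterval → unitInterval) (hσ : IsActionByHomeomorphisms Γ unitInterval σ)
    (hfix0 : ∀ γ : Γ, σ γ 0 = 0) (hfix1 : ∀ γ : Γ, σ γ 1 = 1)
    (hnofinite : ∀ x : unitInterval, 0 < (x : ℝ) → (x : ℝ) < 1 →
      (Set.range fun γ : Γ => σ γ x).Infinite)
    (g₀ : ℂ → unitInterval → ℝ) (hg₀ : IsInvariantLeafwiseHarmonicI ρ σ g₀)
    (hg₀nontrivial : ∃ x : unitInterval, ∃ z ∈ unitDisc, ∃ z' ∈ unitDisc,
      g₀ z x ≠ g₀ z' x) :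
    ∃ f : ℂ → unitInterval → ℝ,
      -- (a) existence and boundary normalization …
      (IsInvariantLeafwiseHarmonicI ρ σ f ∧
        (∀ z ∈ unitDisc, f z 0 = 0) ∧ (∀ z ∈ unitDisc, f z 1 = 1)) ∧
      -- … and uniqueness
      (∀ f' : ℂ → unitInterval → ℝ, IsInvariantLeafwiseHarmonicI ρ σ f' →
        (∀ z ∈ unitDisc, f' z 0 = 0) → (∀ z ∈ unitDisc, f' z 1 = 1) →
        ∀ z ∈ unitDisc, ∀ x : unitInterval, f' z x = f z x) ∧
      -- (b) the range on interior fibers is (0,1)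
      (∀ z ∈ unitDisc, ∀ x : unitInterval, 0 < (x : ℝ) → (x : ℝ) < 1 →
        0 < f z x ∧ f z x < 1) ∧
      -- (c) affine classification
      (∀ g : ℂ → unitInterval → ℝ, IsInvariantLeafwiseHarmonicI ρ σ g →
        ∃ a b : ℝ, ∀ z ∈ unitDisc, ∀ x : unitInterval, g z x = a * f z x + b) := by
  classical
  open L61 in
  obtain ⟨b₀, hb₀⟩ : ∃ b, g₀ 0 0 = b := ⟨_, rfl⟩
  obtain ⟨b₁, hb₁⟩ : ∃ b, g₀ 0 1 = b := ⟨_, rfl⟩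
  have hne : b₀ ≠ b₁ := by
    intro heq
    obtain ⟨x, z, hz, z', hz', hzz⟩ := hg₀nontrivial
    apply hzz
    have h1 := ub_bound hΓ hσ hfix0 hfix1 hnofinite hg₀ z hz x
    have h2 := lb_bound hΓ hσ hfix0 hfix1 hnofinite hg₀ z hz x
    have h1' := ub_bound hΓ hσ hfix0 hfix1 hnofinite hg₀ z' hz' x
    have h2' := lb_bound hΓ hσ hfix0 hfix1 hnofinite hg₀ z' hz' x
    rw [hb₀, hb₁, ← heq] at h1 h2 h1' h2'
    simp only [max_self, min_self] at h1 h2 h1' h2'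
    linarith
  have hsubne : b₁ - b₀ ≠ 0 := sub_ne_zero.2 (Ne.symm hne)
  set f : ℂ → unitInterval → ℝ :=
    fun z x => (b₁ - b₀)⁻¹ * g₀ z x + -b₀ * (b₁ - b₀)⁻¹ with hfdef
  have hf : IsInvariantLeafwiseHarmonicI ρ σ f := ILH_affine hg₀ _ _
  have hf00 : f 0 0 = 0 := by
    show (b₁ - b₀)⁻¹ * g₀ 0 0 + -b₀ * (b₁ - b₀)⁻¹ = 0
    rw [hb₀]; ring
  have hf01 : f 0 1 = 1 := by
    show (b₁ - b₀)⁻¹ * g₀ 0 1 + -b₀ * (b₁ - b₀)⁻¹ = 1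
    rw [hb₁]
    field_simp
    ring
  have hfz0 : ∀ z ∈ unitDisc, f z 0 = 0 :=
    fun z hz => (boundary_const hΓ hfix0 hf z hz).trans hf00
  have hfz1 : ∀ z ∈ unitDisc, f z 1 = 1 :=
    fun z hz => (boundary_const hΓ hfix1 hf z hz).trans hf01
  have huniq : ∀ f' : ℂ → unitInterval → ℝ, IsInvariantLeafwiseHarmonicI ρ σ f' →
      (∀ z ∈ unitDisc, f' z 0 = 0) → (∀ z ∈ unitDisc, f' z 1 = 1) →
      ∀ z ∈ unitDisc, ∀ x : unitInterval, f' z x = f z x := by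
    intro f' hf' h0' h1' z hz x
    have hd : IsInvariantLeafwiseHarmonicI ρ σ (fun z x => f' z x - f z x) := ILH_sub hf' hf
    have e := eq_zero_of_boundary_zero hΓ hσ hfix0 hfix1 hnofinite hd
      (by show f' 0 0 - f 0 0 = 0; rw [h0' 0 zero_mem_unitDisc, hf00]; ring)
      (by show f' 0 1 - f 0 1 = 0; rw [h1' 0 zero_mem_unitDisc, hf01]; ring)
    have h5 : f' z x - f z x = 0 := e z hz x
    linarith
  have hflb : ∀ z ∈ unitDisc, ∀ x : unitInterval, 0 ≤ f z x := by
    intro z hz x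
    have h2 := lb_bound hΓ hσ hfix0 hfix1 hnofinite hf z hz x
    rw [hf00, hf01] at h2
    have : (0:ℝ) = min 0 1 := by norm_num
    linarith [h2, this]
  have hfub : ∀ z ∈ unitDisc, ∀ x : unitInterval, f z x ≤ 1 := by
    intro z hz x
    have h1 := ub_bound hΓ hσ hfix0 hfix1 hnofinite hf z hz x
    rw [hf00, hf01] at h1
    have : max (0:ℝ) 1 = 1 := by norm_num
    linarith [h1, this]
  refine ⟨f, ⟨hf, hfz0, hfz1⟩, huniq, ?_, ?_⟩
  · -- (b) strict range
    intro z hz x hx0 hx1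
    constructor
    · rcases lt_or_eq_of_le (hflb z hz x) with h | h
      · exact h
      · exfalso
        exact no_flat_interior hΓ hσ hfix0 hnofinite hf hflb hx0 hx1 hz h.symm
          (Or.inr (by rw [hf01]; norm_num))
    · rcases lt_or_eq_of_le (hfub z hz x) with h | h
      · exact h
      · exfalso
        have hf2 : IsInvariantLeafwiseHarmonicI ρ σ (fun z x => -1 * f z x + 1) :=
          ILH_affine hf (-1) 1
        have hlb2 : ∀ z ∈ unitDisc, ∀ x : unitInterval, (0:ℝ) ≤ -1 * f z x + 1 := by
          intro z' hz' x'
          have := hfub z' hz' x'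
          linarith
        exact no_flat_interior hΓ hσ hfix0 hnofinite hf2 hlb2 hx0 hx1 hz
          (show -1 * f z x + 1 = 0 by rw [h]; ring)
          (Or.inl (show -1 * f 0 0 + 1 ≠ 0 by rw [hf00]; norm_num))
  · -- (c) affine classification
    intro g hg
    refine ⟨g 0 1 - g 0 0, g 0 0, ?_⟩
    have hd : IsInvariantLeafwiseHarmonicI ρ σ
        (fun z x => g z x - ((g 0 1 - g 0 0) * f z x + g 0 0)) :=
      ILH_sub hg (ILH_affine hf _ _)
    have e := eq_zero_of_boundary_zero hΓ hσ hfix0 hfix1 hnofinite hd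
      (by show g 0 0 - ((g 0 1 - g 0 0) * f 0 0 + g 0 0) = 0; rw [hf00]; ring)
      (by show g 0 1 - ((g 0 1 - g 0 0) * f 0 1 + g 0 0) = 0; rw [hf01]; ring)
    intro z hz x
    have h5 : g z x - ((g 0 1 - g 0 0) * f z x + g 0 0) = 0 := e z hz x
    linarith
end
end

section
/- (Proposition 1.1 / Corollary 4.2 for circle bundles over compact hyperbolic surfaces: no compact leaves forces global constancy.) Let Γ be a cocompact Fuchsian group acting on the circle S¹ by homeomorphisms, and assume that no point of S¹ has a finite Γ-orbit. Then every Γ-invariant leafwise harmonic function f̃ : 𝔻 × S¹ → ℝ is constant on all of 𝔻 × S¹. -/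
open Metric Set Filter

noncomputable section

/-- The unit circle in `ℂ`, as a topological space. -/
abbrev UnitCircle : Type := ↥(Metric.sphere (0 : ℂ) 1)

open Complex Real
open scoped ENNReal

namespace NCL
variable (p : UnitCircle)

lemma norm_coe (y : UnitCircle) : ‖(y : ℂ)‖ = 1 := mem_sphere_zero_iff_norm.mp y.2
lemma coe_ne_zero (y : UnitCircle) : (y : ℂ) ≠ 0 := by
  intro h; have := norm_coe y; rw [h] at this; simp at this

/-- parametrization of the circle with `cmap p π = p`; slit at `p`. -/
def cmap : ℝ → UnitCircle := fun t =>
  ⟨-(p : ℂ) * Complex.exp (t * Complex.I), by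
    rw [mem_sphere_zero_iff_norm, norm_mul, norm_neg, norm_coe]
    simp [Complex.norm_exp]⟩

/-- inverse map -/
def phi : UnitCircle → ℝ := fun y => Complex.arg (-(y : ℂ) / (p : ℂ))

lemma continuous_cmap : Continuous (cmap p) := by
  apply Continuous.subtype_mk
  exact (continuous_const.mul ((Complex.continuous_ofReal.mul continuous_const).cexp))

lemma cmap_coe (t : ℝ) : (cmap p t : ℂ) = -(p : ℂ) * Complex.exp (t * Complex.I) := rfl

lemma cmap_phi (y : UnitCircle) : cmap p (phi p y) = y := by
  have h0 : (-(y : ℂ) / (p : ℂ)) ≠ 0 := by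
    simp [div_eq_zero_iff, coe_ne_zero]
  have habs : ‖(-(y : ℂ) / (p : ℂ))‖ = 1 := by
    rw [norm_div, norm_neg]
    simp [norm_coe]
  have := Complex.norm_mul_exp_arg_mul_I (-(y : ℂ) / (p : ℂ))
  rw [habs] at this
  simp only [Complex.ofReal_one, one_mul] at this
  apply Subtype.ext
  rw [cmap_coe, phi, this]
  field_simp [coe_ne_zero]

lemma phi_cmap {t : ℝ} (ht : t ∈ Set.Ioc (-π) π) : phi p (cmap p t) = t := by
  rw [phi, cmap_coe]
  have : -(-(p:ℂ) * Complex.exp (t * Complex.I)) / (p:ℂ) = Complex.exp (t * Complex.I) := by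
    field_simp [coe_ne_zero]
  rw [this, Complex.exp_mul_I, Complex.arg_cos_add_sin_mul_I ht]

lemma phi_mem_Ioc (y : UnitCircle) : phi p y ∈ Set.Ioc (-π) π := Complex.arg_mem_Ioc _

lemma cmap_pi : cmap p π = p := by
  apply Subtype.ext
  rw [cmap_coe]
  simp [Complex.exp_pi_mul_I]

lemma cmap_neg_pi : cmap p (-π) = p := by
  apply Subtype.ext
  rw [cmap_coe]
  have : ((-π : ℝ) : ℂ) * Complex.I = -(π * Complex.I) := by push_cast; ring
  rw [this, Complex.exp_neg, Complex.exp_pi_mul_I]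
  norm_num

lemma phi_mem_Ioo {y : UnitCircle} (hy : y ≠ p) : phi p y ∈ Set.Ioo (-π) π := by
  rcases phi_mem_Ioc p y with ⟨h1, h2⟩
  rcases lt_or_eq_of_le h2 with h | h
  · exact ⟨h1, h⟩
  · exfalso; apply hy
    have := cmap_phi p y
    rw [h, cmap_pi] at this
    exact this.symm

lemma continuousAt_phi {y : UnitCircle} (hy : y ≠ p) : ContinuousAt (phi p) y := by
  have hmem : (-(y : ℂ) / (p : ℂ)) ∈ Complex.slitPlane := by
    rw [Complex.mem_slitPlane_iff_arg]
    constructor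
    · intro h
      apply hy
      have := cmap_phi p y
      rw [phi, h, cmap_pi] at this
      exact this.symm
    · simp [div_eq_zero_iff, coe_ne_zero]
  have : ContinuousAt (fun y : UnitCircle => -(y:ℂ) / (p:ℂ)) y :=
    ((continuous_subtype_val.neg).div_const _).continuousAt
  exact ContinuousAt.comp (x := y) (g := Complex.arg) (Complex.continuousAt_arg hmem) this

lemma dist_cmap_le {s t : ℝ} (h1 : |s - t| ≤ 1) : dist (cmap p s) (cmap p t) ≤ 2 * |s - t| := by
  rw [Subtype.dist_eq, dist_eq_norm, cmap_coe, cmap_coe]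
  have : -(p:ℂ) * Complex.exp (s * Complex.I) - -(p:ℂ) * Complex.exp (t * Complex.I)
      = -(p:ℂ) * Complex.exp (t * Complex.I) * (Complex.exp ((s - t : ℝ) * Complex.I) - 1) := by
    rw [mul_sub, mul_one, mul_assoc, ← Complex.exp_add]
    push_cast
    ring_nf
  rw [this, norm_mul, norm_mul, norm_neg, norm_coe]
  have habs : ‖((s - t : ℝ) : ℂ) * Complex.I‖ ≤ 1 := by
    rw [norm_mul, Complex.norm_I, mul_one, Complex.norm_real, Real.norm_eq_abs]
    exact h1
  have := Complex.norm_exp_sub_one_le (x := (s - t : ℝ) * Complex.I) habs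
  simp only [Complex.norm_exp_ofReal_mul_I, one_mul, mul_one]
  calc ‖(Complex.exp ((s - t : ℝ) * Complex.I) - 1)‖
      ≤ 2 * ‖((s - t : ℝ) : ℂ) * Complex.I‖ := this
    _ = 2 * |s - t| := by
        rw [norm_mul, Complex.norm_I, mul_one, Complex.norm_real, Real.norm_eq_abs]

/-- Master structure lemma for connected components of open sets avoiding `p`. -/
lemma component_structure {U : Set UnitCircle} (hU : IsOpen U) (hpU : p ∉ U)
    {y : UnitCircle} (hy : y ∈ U) :
    ∃ a b : ℝ,
      IsOpen (connectedComponentIn U y) ∧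
      (cmap p ⁻¹' (connectedComponentIn U y) ∩ Set.Ioo (-π) π) ⊆ Set.Icc a b ∧
      Set.Ioo a b ⊆ (cmap p ⁻¹' (connectedComponentIn U y) ∩ Set.Ioo (-π) π) ∧
      phi p y ∈ (cmap p ⁻¹' (connectedComponentIn U y) ∩ Set.Ioo (-π) π) ∧
      cmap p a ∉ U ∧
      frontier (connectedComponentIn U y) ⊆ {cmap p a, cmap p b} := by
  have hyp : y ≠ p := fun h => hpU (h ▸ hy)
  set W : Set ℝ := cmap p ⁻¹' U ∩ Set.Ioo (-π) π with hW
  have hWopen : IsOpen W := ((continuous_cmap p).isOpen_preimage U hU).inter isOpen_Ioo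
  have hφyW : phi p y ∈ W := by
    refine ⟨?_, phi_mem_Ioo p hyp⟩
    show cmap p (phi p y) ∈ U
    rw [cmap_phi]; exact hy
  set T : Set ℝ := connectedComponentIn W (phi p y) with hT
  have hTopen : IsOpen T := hWopen.connectedComponentIn
  have hTW : T ⊆ W := connectedComponentIn_subset _ _
  have hTne : T.Nonempty := ⟨phi p y, mem_connectedComponentIn hφyW⟩
  have hTIoo : T ⊆ Set.Ioo (-π) π := fun t ht => (hTW ht).2
  have hbdd : BddBelow T := ⟨-π, fun t ht => (hTIoo ht).1.le⟩
  have hbdda : BddAbove T := ⟨π, fun t ht => (hTIoo ht).2.le⟩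
  -- the component equals the image of T
  have himage1 : cmap p '' T ⊆ connectedComponentIn U y := by
    apply IsPreconnected.subset_connectedComponentIn
    · exact (isPreconnected_connectedComponentIn).image _ ((continuous_cmap p).continuousOn)
    · exact ⟨phi p y, mem_connectedComponentIn hφyW, cmap_phi p y⟩
    · rintro z ⟨t, ht, rfl⟩; exact (hTW ht).1
  have hccp : ∀ y' ∈ connectedComponentIn U y, y' ≠ p := by
    intro y' hy' h
    exact hpU (h ▸ connectedComponentIn_subset _ _ hy')
  have hφcc : phi p '' connectedComponentIn U y ⊆ T := by
    apply IsPreconnected.subset_connectedComponentIn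
    · apply (isPreconnected_connectedComponentIn).image
      intro y' hy'
      exact (continuousAt_phi p (hccp y' hy')).continuousWithinAt
    · exact ⟨y, mem_connectedComponentIn hy, rfl⟩
    · rintro t ⟨y', hy', rfl⟩
      refine ⟨?_, phi_mem_Ioo p (hccp y' hy')⟩
      show cmap p (phi p y') ∈ U
      rw [cmap_phi]
      exact connectedComponentIn_subset _ _ hy'
  have himage : connectedComponentIn U y = cmap p '' T := by
    apply Subset.antisymm _ himage1
    intro y' hy'
    exact ⟨phi p y', hφcc ⟨y', hy', rfl⟩, cmap_phi p y'⟩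
  -- the component is open
  have hccopen : IsOpen (connectedComponentIn U y) := by
    have heq : connectedComponentIn U y = phi p ⁻¹' T ∩ {p}ᶜ := by
      ext y'
      constructor
      · intro hy'
        exact ⟨hφcc ⟨y', hy', rfl⟩, hccp y' hy'⟩
      · rintro ⟨h1, h2⟩
        have : cmap p (phi p y') ∈ cmap p '' T := ⟨_, h1, rfl⟩
        rw [cmap_phi] at this
        rwa [himage]
    rw [heq, isOpen_iff_mem_nhds]
    rintro y' ⟨h1, h2⟩
    have h2' : y' ≠ p := h2
    exact inter_mem ((continuousAt_phi p h2').preimage_mem_nhds (hTopen.mem_nhds h1))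
      (isOpen_compl_singleton.mem_nhds h2)
  -- T equals the canonical preimage set
  have hTcan : T = cmap p ⁻¹' (connectedComponentIn U y) ∩ Set.Ioo (-π) π := by
    ext t
    constructor
    · intro ht
      refine ⟨?_, hTIoo ht⟩
      simp only [Set.mem_preimage]
      rw [himage]; exact ⟨t, ht, rfl⟩
    · rintro ⟨h1, h2⟩
      have : cmap p t ∈ cmap p '' T := by rw [← himage]; exact h1
      obtain ⟨s, hs, hst⟩ := this
      have : t = s := by
        have h1' := phi_cmap p (Set.Ioo_subset_Ioc_self h2)
        have h2' := phi_cmap p (Set.Ioo_subset_Ioc_self (hTIoo hs))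
        rw [← h1', ← hst, h2']
      rwa [this]
  set a := sInf T with ha
  set b := sSup T with hb
  have hnotinf : a ∉ T := by
    intro haT
    obtain ⟨ε, hε, hball⟩ := Metric.isOpen_iff.mp hTopen a haT
    have : a - ε / 2 ∈ T := hball (by simp [Real.dist_eq, abs_of_pos, hε])
    have := csInf_le hbdd this
    linarith
  have hIcc : T ⊆ Set.Icc a b := fun t ht => ⟨csInf_le hbdd ht, le_csSup hbdda ht⟩
  have hIoo : Set.Ioo a b ⊆ T :=
    (isConnected_connectedComponentIn_iff.mpr hφyW).Ioo_csInf_csSup_subset hbdd hbdda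
  have hnotsup : b ∉ T := by
    intro hbT
    obtain ⟨ε, hε, hball⟩ := Metric.isOpen_iff.mp hTopen b hbT
    have : b + ε / 2 ∈ T := hball (by simp [Real.dist_eq, abs_of_pos, hε])
    have := le_csSup hbdda this
    linarith
  -- endpoints map outside U
  have hend : ∀ e : ℝ, e ∈ closure T → e ∉ T → cmap p e ∉ U := by
    intro e hecl heT heU
    rcases eq_or_lt_of_le (le_of_not_gt (fun h : e < -π => by
      obtain ⟨t, ht, hdist⟩ := Metric.mem_closure_iff.mp hecl ((-π - e)) (by linarith)
      have := (hTIoo ht).1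
      rw [Real.dist_eq, abs_lt] at hdist
      linarith)) with hneg | hpos
    · exact hpU (by rwa [← hneg, cmap_neg_pi] at heU)
    · have hlt : e < π := by
        rcases eq_or_lt_of_le (le_of_not_gt (fun h : π < e => by
          obtain ⟨t, ht, hdist⟩ := Metric.mem_closure_iff.mp hecl ((e - π)) (by linarith)
          have := (hTIoo ht).2
          rw [Real.dist_eq, abs_lt] at hdist
          linarith)) with heq | hlt
        · exfalso
          apply hpU
          rw [heq, cmap_pi] at heU
          exact heU
        · exact hlt
      have heW : e ∈ W := ⟨heU, hpos, hlt⟩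
      set T' := connectedComponentIn W e with hT'
      have hT'open : IsOpen T' := hWopen.connectedComponentIn
      obtain ⟨t, htT', htT⟩ := _root_.mem_closure_iff.mp hecl T' hT'open
        (mem_connectedComponentIn heW)
      have h1 := connectedComponentIn_eq (F := W) (x := e) htT'
      have h2 := connectedComponentIn_eq (F := W) (x := phi p y) htT
      have : T' = T := by rw [hT', hT, h1, h2]
      exact heT (this ▸ mem_connectedComponentIn heW)
  have hacl : a ∈ closure T := csInf_mem_closure hTne hbdd
  refine ⟨a, b, hccopen, ?_, ?_, ?_, hend a hacl hnotinf, ?_⟩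
  · rw [← hTcan]; exact hIcc
  · rw [← hTcan]; exact hIoo
  · rw [← hTcan]; exact mem_connectedComponentIn hφyW
  -- frontier
  have hclos : closure (connectedComponentIn U y) ⊆ cmap p '' Set.Icc a b := by
    rw [himage]
    apply closure_minimal (image_mono hIcc)
    exact (isCompact_Icc.image (continuous_cmap p)).isClosed
  intro z hz
  obtain ⟨t, ht, rfl⟩ := hclos hz.1
  have hzn : cmap p t ∉ connectedComponentIn U y := by
    intro hmem
    exact hz.2 (interior_maximal (subset_refl _) hccopen hmem)
  have : t ∉ Set.Ioo a b := by
    intro hIoo'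
    apply hzn
    rw [himage]
    exact ⟨t, hIoo hIoo', rfl⟩
  rcases eq_or_lt_of_le ht.1 with h | h
  · left; rw [← h]
  · rcases eq_or_lt_of_le ht.2 with h2 | h2
    · right; rw [h2]; rfl
    · exact absurd ⟨h, h2⟩ this

section Action

variable {Γ : Type*} [Group Γ] {σ : Γ → UnitCircle → UnitCircle}

lemma sigma_inv_left (hσ : IsActionByHomeomorphisms Γ UnitCircle σ) (γ : Γ) (x : UnitCircle) :
    σ γ⁻¹ (σ γ x) = x := by
  rw [← hσ.mul_act, inv_mul_cancel, hσ.one_act]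

lemma sigma_inv_right (hσ : IsActionByHomeomorphisms Γ UnitCircle σ) (γ : Γ) (x : UnitCircle) :
    σ γ (σ γ⁻¹ x) = x := by
  rw [← hσ.mul_act, mul_inv_cancel, hσ.one_act]

/-- the action as a homeomorphism -/
def toHomeo (hσ : IsActionByHomeomorphisms Γ UnitCircle σ) (γ : Γ) :
    UnitCircle ≃ₜ UnitCircle where
  toFun := σ γ
  invFun := σ γ⁻¹
  left_inv := sigma_inv_left hσ γ
  right_inv := sigma_inv_right hσ γ
  continuous_toFun := hσ.continuous_act γ
  continuous_invFun := hσ.continuous_act γ⁻¹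

lemma connectedSpace_unitCircle : ConnectedSpace UnitCircle :=
  Subtype.connectedSpace
    (isConnected_sphere (by rw [Complex.rank_real_complex]; norm_num) 0 one_pos.le)

/-- Key dynamical lemma: with no finite orbits, every minimal set is contained in
every orbit closure. -/
lemma minimal_subset_orbitClosure (hσ : IsActionByHomeomorphisms Γ UnitCircle σ)
    (hnofinite : ∀ x : UnitCircle, (Set.range fun γ : Γ => σ γ x).Infinite)
    {K : Set UnitCircle} (hKne : K.Nonempty) (hKcl : IsClosed K)
    (hKinv : ∀ γ : Γ, ∀ y ∈ K, σ γ y ∈ K)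
    (hKmin : ∀ K' ⊆ K, K'.Nonempty → IsClosed K' → (∀ γ : Γ, ∀ y ∈ K', σ γ y ∈ K') → K' = K)
    (x : UnitCircle) : K ⊆ closure (Set.range fun γ : Γ => σ γ x) := by
  haveI : ConnectedSpace UnitCircle := connectedSpace_unitCircle
  set C := closure (Set.range fun γ : Γ => σ γ x) with hC
  have hCcl : IsClosed C := isClosed_closure
  have horbC : ∀ γ : Γ, σ γ x ∈ C := fun γ => subset_closure ⟨γ, rfl⟩
  have hCinv : ∀ γ : Γ, ∀ y ∈ C, σ γ y ∈ C := by
    intro γ y hy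
    have h1 : σ γ '' (Set.range fun δ : Γ => σ δ x) ⊆ Set.range fun δ : Γ => σ δ x := by
      rintro _ ⟨_, ⟨δ, rfl⟩, rfl⟩
      exact ⟨γ * δ, hσ.mul_act γ δ x⟩
    have h2 : σ γ y ∈ σ γ '' C := ⟨y, hy, rfl⟩
    have h3 := image_closure_subset_closure_image (hσ.continuous_act γ) (s := Set.range fun δ : Γ => σ δ x)
    exact closure_mono h1 (h3 h2)
  -- Step 1 : C meets K
  have hmeet : (C ∩ K).Nonempty := by
    by_contra hcon
    rw [Set.not_nonempty_iff_eq_empty] at hcon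
    obtain ⟨p, hpK⟩ := hKne
    set U := Kᶜ with hU
    have hUopen : IsOpen U := hKcl.isOpen_compl
    have hpU : p ∉ U := fun h => h hpK
    have hCU : ∀ y ∈ C, y ∈ U := by
      intro y hy hyK
      exact absurd hcon (Set.nonempty_iff_ne_empty.mp ⟨y, hy, hyK⟩)
    have hxU : ∀ γ : Γ, σ γ x ∈ U := fun γ => hCU _ (horbC γ)
    have hUinv : ∀ γ : Γ, ∀ y ∈ U, σ γ y ∈ U := by
      intro γ y hyU hmem
      exact hyU (by simpa [sigma_inv_left hσ] using hKinv γ⁻¹ _ hmem)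
    set J : Γ → Set UnitCircle := fun γ => connectedComponentIn U (σ γ x) with hJ
    have hJsub : ∀ γ, J γ ⊆ U := fun γ => connectedComponentIn_subset _ _
    have hmemJ : ∀ γ, σ γ x ∈ J γ := fun γ => mem_connectedComponentIn (hxU γ)
    have himsub : ∀ (γ : Γ) (y : UnitCircle), y ∈ U →
        σ γ '' connectedComponentIn U y ⊆ connectedComponentIn U (σ γ y) := by
      intro γ y hy
      apply IsPreconnected.subset_connectedComponentIn
      · exact (isPreconnected_connectedComponentIn).image _ (hσ.continuous_act γ).continuousOn
      · exact ⟨y, mem_connectedComponentIn hy, rfl⟩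
      · rintro _ ⟨z, hz, rfl⟩
        exact hUinv γ z (connectedComponentIn_subset _ _ hz)
    have himJ : ∀ (γ : Γ) (y : UnitCircle), y ∈ U →
        σ γ '' connectedComponentIn U y = connectedComponentIn U (σ γ y) := by
      intro γ y hy
      apply Subset.antisymm (himsub γ y hy)
      intro z hz
      have h1 := himsub γ⁻¹ (σ γ y) (hUinv γ y hy)
      rw [sigma_inv_left hσ] at h1
      have h2 : σ γ⁻¹ z ∈ connectedComponentIn U y := h1 ⟨z, hz, rfl⟩
      exact ⟨σ γ⁻¹ z, h2, sigma_inv_right hσ γ z⟩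
    by_cases hfin : (Set.range J).Finite
    · -- Case A : finitely many components in the orbit of components; finite orbit exists
      set F := ⋃ S ∈ Set.range J, frontier S with hF
      have hfr : ∀ γ : Γ, (frontier (J γ)).Finite := by
        intro γ
        obtain ⟨a, b, -, -, -, -, -, hfr⟩ := component_structure p hUopen hpU (hxU γ)
        exact ((Set.finite_singleton _).insert _).subset hfr
      have hFfin : F.Finite := by
        apply Set.Finite.biUnion hfin
        rintro S ⟨γ, rfl⟩
        exact hfr γ
      have hFne : F.Nonempty := by
        obtain ⟨a, b, hopen, -, -, -, -, -⟩ := component_structure p hUopen hpU (hxU 1)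
        rcases Set.eq_empty_or_nonempty (frontier (J 1)) with h | h
        · exfalso
          have hclopen : IsClopen (J 1) := isClopen_iff_frontier_eq_empty.mpr h
          rcases isClopen_iff.mp hclopen with h1 | h1
          · exact absurd (hmemJ 1) (h1 ▸ Set.notMem_empty _)
          · apply hpU
            apply hJsub 1
            rw [h1]
            trivial
        · obtain ⟨q, hq⟩ := h
          exact ⟨q, Set.mem_biUnion ⟨1, rfl⟩ hq⟩
      obtain ⟨q, hqF⟩ := hFne
      obtain ⟨S, hSmem, hqfr⟩ := Set.mem_iUnion₂.mp hqF
      obtain ⟨δ, rfl⟩ := hSmem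
      have hsub : (Set.range fun γ : Γ => σ γ q) ⊆ F := by
        rintro _ ⟨γ, rfl⟩
        have h1 : σ γ '' frontier (J δ) = frontier (σ γ '' J δ) :=
          (toHomeo hσ γ).image_frontier (J δ)
        have h2 : σ γ '' J δ = J (γ * δ) := by
          rw [hJ]
          simp only []
          rw [himJ γ (σ δ x) (hxU δ), ← hσ.mul_act]
        show σ γ q ∈ F
        rw [hF]
        apply Set.mem_iUnion₂.mpr
        refine ⟨J (γ * δ), ⟨γ * δ, rfl⟩, ?_⟩
        rw [← h2, ← h1]
        exact ⟨q, hqfr, rfl⟩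
      exact hnofinite q (hFfin.subset hsub)
    · -- Case B : infinitely many components; small components approach K
      have hinfJ : (Set.range J).Infinite := hfin
      -- C is compact, disjoint from K, so at positive distance
      have hCcomp : IsCompact C := hCcl.isCompact
      have hCne : C.Nonempty := ⟨σ 1 x, horbC 1⟩
      obtain ⟨c₀, hc₀C, hc₀min⟩ := hCcomp.exists_isMinOn hCne
        (continuous_infDist_pt K).continuousOn
      have hδpos : 0 < Metric.infDist c₀ K := by
        rw [← (hKcl.notMem_iff_infDist_pos ⟨p, hpK⟩)]
        exact fun h => (hCU c₀ hc₀C) h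
      set δ := Metric.infDist c₀ K with hδ
      -- canonical real sets for the components
      set SS : Set UnitCircle → Set ℝ := fun S => cmap p ⁻¹' S ∩ Set.Ioo (-π) π with hSS
      have hdisjJ : ∀ S ∈ Set.range J, ∀ S' ∈ Set.range J, S ≠ S' → Disjoint (SS S) (SS S') := by
        rintro _ ⟨γ, rfl⟩ _ ⟨γ', rfl⟩ hne
        have : Disjoint (J γ) (J γ') := by
          rw [Set.disjoint_left]
          intro z hz hz'
          apply hne
          have e1 := connectedComponentIn_eq (F := U) (x := σ γ x) hz
          have e2 := connectedComponentIn_eq (F := U) (x := σ γ' x) hz'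
          show connectedComponentIn U (σ γ x) = connectedComponentIn U (σ γ' x)
          rw [e1, e2]
        exact Set.disjoint_left.mpr fun t ht ht' =>
          Set.disjoint_left.mp this ht.1 ht'.1
      -- all big components form a finite set
      set ε := min (δ / 8) (2⁻¹ : ℝ) with hε
      have hεpos : 0 < ε := lt_min (by linarith) (by norm_num)
      have hbig : {S | S ∈ Set.range J ∧ ENNReal.ofReal ε ≤ MeasureTheory.volume (SS S)}.Finite := by
        by_contra hbiginf
        obtain ⟨n, hn⟩ := exists_nat_gt (2 * π / ε)
        have hn' : 2 * π < n * ε := by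
          rw [div_lt_iff₀ hεpos] at hn
          linarith
        have hbig2 : Set.Infinite {S | S ∈ Set.range J ∧ ENNReal.ofReal ε ≤ MeasureTheory.volume (SS S)} := hbiginf
        obtain ⟨t, htsub, htfin, htcard⟩ := hbig2.exists_subset_ncard_eq n
        have hmeas : ∀ S ∈ htfin.toFinset, MeasurableSet (SS S) := by
          intro S hS
          rw [Set.Finite.mem_toFinset] at hS
          obtain ⟨γ, rfl⟩ := (htsub hS).1
          obtain ⟨a, b, hopen, -, -, -, -, -⟩ := component_structure p hUopen hpU (hxU γ)
          exact (((continuous_cmap p).isOpen_preimage _ hopen).inter isOpen_Ioo).measurableSet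
        have hpd : (↑htfin.toFinset : Set (Set UnitCircle)).PairwiseDisjoint SS := by
          intro S hS S' hS' hne
          rw [Set.Finite.coe_toFinset] at hS hS'
          exact hdisjJ S (htsub hS).1 S' (htsub hS').1 hne
        have hsum := MeasureTheory.measure_biUnion_finset hpd hmeas (μ := MeasureTheory.volume)
        have hsub2 : (⋃ S ∈ htfin.toFinset, SS S) ⊆ Set.Ioo (-π) π := by
          intro t ht
          obtain ⟨S, -, hmem⟩ := Set.mem_iUnion₂.mp ht
          exact hmem.2
        have hle : MeasureTheory.volume (⋃ S ∈ htfin.toFinset, SS S) ≤ ENNReal.ofReal (2 * π) := by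
          calc MeasureTheory.volume (⋃ S ∈ htfin.toFinset, SS S)
              ≤ MeasureTheory.volume (Set.Ioo (-π) π) := MeasureTheory.measure_mono hsub2
            _ = ENNReal.ofReal (2 * π) := by rw [Real.volume_Ioo]; ring_nf
        have hge : (htfin.toFinset.card : ℝ≥0∞) * ENNReal.ofReal ε
            ≤ ∑ S ∈ htfin.toFinset, MeasureTheory.volume (SS S) := by
          rw [← nsmul_eq_mul]
          apply Finset.card_nsmul_le_sum
          intro S hS
          rw [Set.Finite.mem_toFinset] at hS
          exact (htsub hS).2
        have hcard : htfin.toFinset.card = n := by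
          rw [← htcard, Set.ncard_eq_toFinset_card _ htfin]
        rw [hcard] at hge
        rw [← hsum] at hge
        have hfin2 : (n : ℝ≥0∞) * ENNReal.ofReal ε ≤ ENNReal.ofReal (2 * π) := le_trans hge hle
        have : ENNReal.ofReal (n * ε) ≤ ENNReal.ofReal (2 * π) := by
          rwa [ENNReal.ofReal_mul (by positivity), ENNReal.ofReal_natCast]
        rw [ENNReal.ofReal_le_ofReal_iff (by positivity)] at this
        linarith
      -- choose a small component
      have : ∃ S ∈ Set.range J, MeasureTheory.volume (SS S) < ENNReal.ofReal ε := by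
        by_contra hno
        push_neg at hno
        apply hinfJ
        apply hbig.subset
        intro S hS
        exact ⟨hS, hno S hS⟩
      obtain ⟨S, ⟨γ, rfl⟩, hvol⟩ := this
      obtain ⟨a, b, hopen, hIcc, hIoo, hφmem, hKa, -⟩ := component_structure p hUopen hpU (hxU γ)
      have hab : b - a < ε := by
        by_contra hge
        push_neg at hge
        have : ENNReal.ofReal ε ≤ MeasureTheory.volume (SS (J γ)) := by
          calc ENNReal.ofReal ε ≤ ENNReal.ofReal (b - a) := ENNReal.ofReal_le_ofReal hge
            _ = MeasureTheory.volume (Set.Ioo a b) := (Real.volume_Ioo).symm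
            _ ≤ _ := MeasureTheory.measure_mono hIoo
        exact absurd hvol (not_lt.mpr this)
      set t := phi p (σ γ x) with ht
      have htmem : t ∈ Set.Icc a b := hIcc hφmem
      have hdist : dist (σ γ x) (cmap p a) ≤ 2 * |t - a| := by
        have h1 : |t - a| ≤ 1 := by
          rw [_root_.abs_of_nonneg (by linarith [htmem.1])]
          have : t - a ≤ b - a := by linarith [htmem.2]
          have hε2 : ε ≤ 2⁻¹ := min_le_right _ _
          linarith
        have := dist_cmap_le p (s := t) (t := a) h1
        rwa [cmap_phi] at this
      have hKa' : cmap p a ∈ K := by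
        by_contra h
        exact hKa h
      have habs : |t - a| ≤ b - a := by
        rw [_root_.abs_of_nonneg (by linarith [htmem.1])]
        linarith [htmem.2]
      have hinf : Metric.infDist (σ γ x) K < δ := by
        calc Metric.infDist (σ γ x) K ≤ dist (σ γ x) (cmap p a) := Metric.infDist_le_dist_of_mem hKa'
          _ ≤ 2 * |t - a| := hdist
          _ ≤ 2 * (b - a) := by linarith
          _ < 2 * ε := by linarith
          _ ≤ 2 * (δ / 8) := by have := min_le_left (δ / 8) (2⁻¹ : ℝ); linarith
          _ < δ := by linarith
      exact absurd hinf (not_lt.mpr (hc₀min (horbC γ)))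
  -- Step 2 : conclude by minimality
  obtain ⟨q, hqC, hqK⟩ := hmeet
  set D := closure (Set.range fun γ : Γ => σ γ q) with hD
  have hDC : D ⊆ C := by
    apply closure_minimal _ hCcl
    rintro _ ⟨γ, rfl⟩
    exact hCinv γ q hqC
  have hDK : D ⊆ K := by
    apply closure_minimal _ hKcl
    rintro _ ⟨γ, rfl⟩
    exact hKinv γ q hqK
  have hDinv : ∀ γ : Γ, ∀ y ∈ D, σ γ y ∈ D := by
    intro γ y hy
    have h1 : σ γ '' (Set.range fun δ : Γ => σ δ q) ⊆ Set.range fun δ : Γ => σ δ q := by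
      rintro _ ⟨_, ⟨δ, rfl⟩, rfl⟩
      exact ⟨γ * δ, hσ.mul_act γ δ q⟩
    have h3 := image_closure_subset_closure_image (hσ.continuous_act γ)
      (s := Set.range fun δ : Γ => σ δ q)
    exact closure_mono h1 (h3 ⟨y, hy, rfl⟩)
  have hDne : D.Nonempty := ⟨σ 1 q, subset_closure ⟨1, rfl⟩⟩
  have := hKmin D hDK hDne isClosed_closure hDinv
  rw [← this]
  exact hDC

end Action

section Action2
variable {Γ : Type*} [Group Γ] {σ : Γ → UnitCircle → UnitCircle}

/-- Zorn's lemma: existence of a minimal nonempty closed invariant subset. -/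
lemma exists_minimal_invariant (hσ : IsActionByHomeomorphisms Γ UnitCircle σ)
    {A : Set UnitCircle} (hAne : A.Nonempty) (hAcl : IsClosed A)
    (hAinv : ∀ γ : Γ, ∀ y ∈ A, σ γ y ∈ A) :
    ∃ K, K ⊆ A ∧ K.Nonempty ∧ IsClosed K ∧ (∀ γ : Γ, ∀ y ∈ K, σ γ y ∈ K) ∧
      (∀ K' ⊆ K, K'.Nonempty → IsClosed K' → (∀ γ : Γ, ∀ y ∈ K', σ γ y ∈ K') → K' = K) := by
  set S : Set (Set UnitCircle) :=
    {B | B ⊆ A ∧ B.Nonempty ∧ IsClosed B ∧ ∀ γ : Γ, ∀ y ∈ B, σ γ y ∈ B} with hS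
  have hAS : A ∈ S := ⟨subset_rfl, hAne, hAcl, hAinv⟩
  have Hc : ∀ c ⊆ S, IsChain (· ⊆ ·) c → c.Nonempty → ∃ lb ∈ S, ∀ s ∈ c, lb ⊆ s := by
    intro c hcS hchain hcne
    refine ⟨⋂₀ c, ?_, fun s hs => sInter_subset_of_mem hs⟩
    obtain ⟨B₀, hB₀⟩ := hcne
    have hne : (⋂₀ c).Nonempty := by
      haveI : Nonempty c := ⟨⟨B₀, hB₀⟩⟩
      have hdir : Directed (fun (s t : Set UnitCircle) => s ⊇ t) (fun i : c => (i : Set UnitCircle)) := by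
        intro i j
        rcases hchain.total i.2 j.2 with h | h
        · exact ⟨i, subset_rfl, h⟩
        · exact ⟨j, h, subset_rfl⟩
      have := IsCompact.nonempty_iInter_of_directed_nonempty_isCompact_isClosed
        (fun i : c => (i : Set UnitCircle)) hdir
        (fun i => (hcS i.2).2.1)
        (fun i => (hcS i.2).2.2.1.isCompact)
        (fun i => (hcS i.2).2.2.1)
      rwa [← sInter_eq_iInter] at this
    refine ⟨?_, hne, ?_, ?_⟩
    · exact (sInter_subset_of_mem hB₀).trans (hcS hB₀).1
    · exact isClosed_sInter fun s hs => (hcS hs).2.2.1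
    · intro γ y hy
      rw [Set.mem_sInter] at hy ⊢
      intro s hs
      exact (hcS hs).2.2.2 γ y (hy s hs)
  obtain ⟨m, hmA, hmmin⟩ := zorn_superset_nonempty S Hc A hAS
  obtain ⟨hmS, hmin⟩ := hmmin
  refine ⟨m, hmA, hmS.2.1, hmS.2.2.1, hmS.2.2.2, ?_⟩
  intro K' hK'm hK'ne hK'cl hK'inv
  have hK'S : K' ∈ S := ⟨hK'm.trans hmS.1, hK'ne, hK'cl, hK'inv⟩
  exact Set.Subset.antisymm hK'm (hmin hK'S hK'm)

end Action2

lemma unitDisc_isOpen : IsOpen unitDisc := isOpen_ball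
lemma unitDisc_preconnected : IsPreconnected unitDisc := (convex_ball (0:ℂ) 1).isPreconnected
lemma zero_mem_unitDisc : (0 : ℂ) ∈ unitDisc := by simp [unitDisc, Real.pi_pos]

/-- Maximum principle for harmonic functions on the disc. -/
lemma harmonic_eq_of_max {f : ℂ → ℝ} (hf : HarmonicOnSet f unitDisc)
    (hc : ContinuousOn f unitDisc) {z₀ : ℂ} (hz₀ : z₀ ∈ unitDisc)
    (hmax : ∀ z ∈ unitDisc, f z ≤ f z₀) : ∀ z ∈ unitDisc, f z = f z₀ := by
  have key : ∀ z ∈ unitDisc, f z = f z₀ →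
      ∃ r > 0, Metric.ball z r ⊆ unitDisc ∧ ∀ w ∈ Metric.ball z r, f w = f z₀ := by
    intro z hz hfz
    obtain ⟨r, hr, hball, g, hg, hgf⟩ := hf z hz
    refine ⟨r, hr, hball, ?_⟩
    have hdiff : DifferentiableOn ℂ (fun w => Complex.exp (g w)) (Metric.ball z r) :=
      hg.cexp
    have hmaxOn : IsMaxOn (norm ∘ fun w => Complex.exp (g w)) (Metric.ball z r) z := by
      intro w hw
      show ‖Complex.exp (g w)‖ ≤ ‖Complex.exp (g z)‖
      rw [Complex.norm_exp, Complex.norm_exp,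
        ← hgf w hw, ← hgf z (Metric.mem_ball_self hr)]
      exact Real.exp_le_exp.mpr (by rw [hfz]; exact hmax w (hball hw))
    have := Complex.eqOn_of_isPreconnected_of_isMaxOn_norm
      (convex_ball z r).isPreconnected Metric.isOpen_ball hdiff (Metric.mem_ball_self hr) hmaxOn
    intro w hw
    have h1 := this hw
    simp only [Function.const_apply] at h1
    have h2 : Real.exp (f w) = Real.exp (f z) := by
      have := congrArg norm h1
      rwa [Complex.norm_exp, Complex.norm_exp, ← hgf w hw, ← hgf z (Metric.mem_ball_self hr)]
        at this
    have := Real.exp_injective h2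
    rw [this, hfz]
  by_contra hcon
  push_neg at hcon
  obtain ⟨z₁, hz₁, hne⟩ := hcon
  set V : Set ℂ := {z | ∃ r > 0, Metric.ball z r ⊆ unitDisc ∧ ∀ w ∈ Metric.ball z r, f w = f z₀}
    with hV
  have hVopen : IsOpen V := by
    rw [Metric.isOpen_iff]
    rintro z ⟨r, hr, hball, hfw⟩
    refine ⟨r / 2, by linarith, ?_⟩
    intro w hw
    refine ⟨r / 2, by linarith, ?_, ?_⟩
    · intro u hu
      apply hball
      rw [Metric.mem_ball] at *
      calc dist u z ≤ dist u w + dist w z := dist_triangle _ _ _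
        _ < r / 2 + r / 2 := add_lt_add hu hw
        _ = r := by ring
    · intro u hu
      apply hfw
      rw [Metric.mem_ball] at *
      calc dist u z ≤ dist u w + dist w z := dist_triangle _ _ _
        _ < r / 2 + r / 2 := add_lt_add hu hw
        _ = r := by ring
  set W : Set ℂ := unitDisc ∩ f ⁻¹' (Set.Iio (f z₀)) with hW
  have hWopen : IsOpen W := hc.isOpen_inter_preimage unitDisc_isOpen isOpen_Iio
  have hsub : unitDisc ⊆ V ∪ W := by
    intro z hz
    rcases eq_or_lt_of_le (hmax z hz) with h | h
    · exact Or.inl (key z hz h)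
    · exact Or.inr ⟨hz, h⟩
  have hVne : (unitDisc ∩ V).Nonempty := ⟨z₀, hz₀, key z₀ hz₀ rfl⟩
  have hWne : (unitDisc ∩ W).Nonempty :=
    ⟨z₁, hz₁, hz₁, lt_of_le_of_ne (hmax z₁ hz₁) hne⟩
  obtain ⟨z, hzU, hzV, hzW⟩ := unitDisc_preconnected V W hVopen hWopen hsub hVne hWne
  obtain ⟨r, hr, -, hfw⟩ := hzV
  exact absurd (hfw z (Metric.mem_ball_self hr)) (ne_of_lt hzW.2)

end NCL

open NCL in
/-- **Proposition 1.1 / Corollary 4.2 for circle bundles.** If a cocompact Fuchsian group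
`Γ` acts on the circle by homeomorphisms with no finite orbit, then every `Γ`-invariant
leafwise harmonic function on `𝔻 × S¹` is globally constant. -/
theorem no_compact_leaves_implies_constant
    {Γ : Type*} [Group Γ] (ρ : Γ → ℂ → ℂ) (hΓ : IsCocompactFuchsian Γ ρ)
    (σ : Γ → UnitCircle → UnitCircle) (hσ : IsActionByHomeomorphisms Γ UnitCircle σ)
    (hnofinite : ∀ x : UnitCircle, (Set.range fun γ : Γ => σ γ x).Infinite)
    (f : ℂ → UnitCircle → ℝ)
    (hcont : ContinuousOn (fun p : ℂ × UnitCircle => f p.1 p.2)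
      (unitDisc ×ˢ (univ : Set UnitCircle)))
    (hharm : ∀ x : UnitCircle, HarmonicOnSet (fun z => f z x) unitDisc)
    (hinv : ∀ γ : Γ, ∀ z ∈ unitDisc, ∀ x : UnitCircle, f (ρ γ z) (σ γ x) = f z x) :
    ∀ z ∈ unitDisc, ∀ z' ∈ unitDisc, ∀ x x' : UnitCircle, f z x = f z' x' := by
  classical
  obtain ⟨K₀, hK₀sub, hK₀comp, hK₀cov⟩ := hΓ.cocompact
  have hx1 : ((1 : ℂ) ∈ Metric.sphere (0:ℂ) 1) := by simp
  have hK₀ne : (K₀ ×ˢ (univ : Set UnitCircle)).Nonempty := by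
    obtain ⟨γ, hγ⟩ := hK₀cov 0 zero_mem_unitDisc
    exact ⟨(ρ γ 0, ⟨1, hx1⟩), hγ, trivial⟩
  have hcomp : IsCompact (K₀ ×ˢ (univ : Set UnitCircle)) := hK₀comp.prod isCompact_univ
  have hcont' : ContinuousOn (fun p : ℂ × UnitCircle => f p.1 p.2) (K₀ ×ˢ univ) :=
    hcont.mono (Set.prod_mono hK₀sub subset_rfl)
  obtain ⟨q₀, hmem₀, hmax₀⟩ := hcomp.exists_isMaxOn hK₀ne hcont'
  obtain ⟨q₁, hmem₁, hmin₁⟩ := hcomp.exists_isMinOn hK₀ne hcont'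
  obtain ⟨z₀, x₀⟩ := q₀
  obtain ⟨z₁, x₁⟩ := q₁
  set M := f z₀ x₀ with hM
  set m := f z₁ x₁ with hm
  have hub : ∀ z ∈ unitDisc, ∀ x : UnitCircle, f z x ≤ M := by
    intro z hz x
    obtain ⟨γ, hγ⟩ := hK₀cov z hz
    rw [← hinv γ z hz x]
    exact hmax₀ (Set.mk_mem_prod hγ trivial)
  have hlb : ∀ z ∈ unitDisc, ∀ x : UnitCircle, m ≤ f z x := by
    intro z hz x
    obtain ⟨γ, hγ⟩ := hK₀cov z hz
    rw [← hinv γ z hz x]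
    exact hmin₁ (Set.mk_mem_prod hγ trivial)
  have hcz : ∀ x : UnitCircle, ContinuousOn (fun z => f z x) unitDisc := by
    intro x
    exact hcont.comp (continuous_id.prodMk continuous_const).continuousOn
      (fun z hz => Set.mk_mem_prod hz trivial)
  have hcx : ∀ z ∈ unitDisc, Continuous (fun x : UnitCircle => f z x) := by
    intro z hz
    exact hcont.comp_continuous (continuous_const.prodMk continuous_id)
      (fun x => Set.mk_mem_prod hz trivial)
  have hz₀mem : z₀ ∈ unitDisc := hK₀sub hmem₀.1
  have hz₁mem : z₁ ∈ unitDisc := hK₀sub hmem₁.1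
  have hconstx₀ : ∀ z ∈ unitDisc, f z x₀ = M :=
    harmonic_eq_of_max (hharm x₀) (hcz x₀) hz₀mem (fun z hz => hub z hz x₀)
  have hconstx₁ : ∀ z ∈ unitDisc, f z x₁ = m := by
    have hharmneg : HarmonicOnSet (fun z => -(f z x₁)) unitDisc := by
      intro z hz
      obtain ⟨r, hr, hb, g, hg, hgf⟩ := hharm x₁ z hz
      exact ⟨r, hr, hb, fun w => -(g w), hg.neg, fun w hw => by
        rw [Complex.neg_re, ← hgf w hw]⟩
    have := harmonic_eq_of_max hharmneg ((hcz x₁).neg) hz₁mem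
      (fun z hz => neg_le_neg (hlb z hz x₁))
    intro z hz
    have h := this z hz
    simpa using h
  -- invariant closed sets where f ≡ M resp. m
  set A : Set UnitCircle := {x | ∀ z ∈ unitDisc, f z x = M} with hA
  set B : Set UnitCircle := {x | ∀ z ∈ unitDisc, f z x = m} with hB
  have hAcl : IsClosed A := by
    have : A = ⋂ z ∈ unitDisc, {x : UnitCircle | f z x = M} := by
      ext x; simp [hA]
    rw [this]
    exact isClosed_biInter fun z hz => isClosed_eq (hcx z hz) continuous_const
  have hBcl : IsClosed B := by
    have : B = ⋂ z ∈ unitDisc, {x : UnitCircle | f z x = m} := by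
      ext x; simp [hB]
    rw [this]
    exact isClosed_biInter fun z hz => isClosed_eq (hcx z hz) continuous_const
  have hAinv : ∀ γ : Γ, ∀ x ∈ A, σ γ x ∈ A := by
    intro γ x hx z hz
    have h1 := hinv γ⁻¹ z hz (σ γ x)
    rw [sigma_inv_left hσ] at h1
    rw [← h1]
    exact hx _ (hΓ.maps_disc γ⁻¹ z hz)
  have hBinv : ∀ γ : Γ, ∀ x ∈ B, σ γ x ∈ B := by
    intro γ x hx z hz
    have h1 := hinv γ⁻¹ z hz (σ γ x)
    rw [sigma_inv_left hσ] at h1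
    rw [← h1]
    exact hx _ (hΓ.maps_disc γ⁻¹ z hz)
  have hx₀A : x₀ ∈ A := hconstx₀
  have hx₁B : x₁ ∈ B := hconstx₁
  obtain ⟨Kmin, hKA, hKne, hKcl, hKinv, hKminimal⟩ :=
    exists_minimal_invariant hσ ⟨x₀, hx₀A⟩ hAcl hAinv
  have hKsub := minimal_subset_orbitClosure hσ hnofinite hKne hKcl hKinv hKminimal x₁
  have horbB : closure (Set.range fun γ : Γ => σ γ x₁) ⊆ B := by
    apply closure_minimal _ hBcl
    rintro _ ⟨γ, rfl⟩
    exact hBinv γ x₁ hx₁B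
  obtain ⟨y, hyK⟩ := hKne
  have hyA : y ∈ A := hKA hyK
  have hyB : y ∈ B := horbB (hKsub hyK)
  have hMm : M = m := by
    rw [← hyA 0 zero_mem_unitDisc, ← hyB 0 zero_mem_unitDisc]
  intro z hz z' hz' x x'
  have h1 : f z x = M := le_antisymm (hub z hz x) (hMm ▸ hlb z hz x)
  have h2 : f z' x' = M := le_antisymm (hub z' hz' x') (hMm ▸ hlb z' hz' x')
  rw [h1, h2]
end
end
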